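/- Let A' > 0, δ ∈ (0,1), τ > 0, K₀ > 0, and define ψ_n(p) := ∫₀^∞ (e^t − 1)^(nδ) · exp( −A'·p·(e^t − 1)^δ ) dt and U(p) := K₀·p³·τ^δ·exp( −A'·p·τ^δ/(1−p)^(1−δ) )·ψ₀(p) for p ∈ (0,1). If p* ∈ (0,1) is a local maximum of U on (0,1), then p* satisfies 3/(A'·p*) − τ^δ·(1 − p*·δ)/(1−p*)^(2−δ) = ψ₁(p*)/ψ₀(p*). -/

import Mathlib

open MeasureTheory Set Real

/-- `ψ_n(p) := ∫₀^∞ (e^t − 1)^(nδ)·exp(−A'·p·(e^t − 1)^δ) dt`. -/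
noncomputable def psi (A' δ : ℝ) (n : ℕ) (p : ℝ) : ℝ :=
  ∫ t in Set.Ioi (0 : ℝ),
    (Real.exp t - 1) ^ ((n : ℝ) * δ) * Real.exp (-A' * p * (Real.exp t - 1) ^ δ)

lemma aux_rpow_le_exp {γ a : ℝ} (hγ : 0 ≤ γ) (ha : 0 < a) :
    ∃ M : ℝ, 0 < M ∧ ∀ v : ℝ, 0 < v → v ^ γ ≤ M * Real.exp (a * v) := by
  obtain ⟨m, hm⟩ : ∃ m : ℕ, γ ≤ m := exists_nat_ge γ
  refine ⟨1 + ((m : ℝ) / a + 1) ^ m, by positivity, fun v hv => ?_⟩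
  have hepos : (0:ℝ) < Real.exp (a * v) := Real.exp_pos _
  have hone : (1:ℝ) ≤ Real.exp (a * v) := Real.one_le_exp (by positivity)
  have hMp : (0:ℝ) ≤ ((m : ℝ) / a + 1) ^ m := by positivity
  rcases le_or_gt v 1 with h1 | h1
  · have : v ^ γ ≤ 1 := Real.rpow_le_one hv.le h1 hγ
    nlinarith
  · have h2 : v ^ γ ≤ v ^ (m : ℝ) := Real.rpow_le_rpow_of_exponent_le h1.le hm
    rw [Real.rpow_natCast] at h2
    have h3 : v ^ m ≤ ((m : ℝ) / a + 1) ^ m * Real.exp (a * v) := by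
      rcases Nat.eq_zero_or_pos m with rfl | hm0
      · simpa using hone
      · have hmp : (0:ℝ) < m := by exact_mod_cast hm0
        have hexp1 : a * v / m + 1 ≤ Real.exp (a * v / m) := Real.add_one_le_exp _
        have key : v ≤ ((m : ℝ) / a + 1) * Real.exp (a * v / m) := by
          have e1 : v = (m / a) * (a * v / m) := by field_simp
          have e2 : (m / a) * (a * v / m) ≤ (m / a) * (a * v / m + 1) := by
            have : (0:ℝ) < m / a := by positivity
            nlinarith
          have e3 : (m / a) * (a * v / m + 1) ≤ ((m : ℝ) / a + 1) * Real.exp (a * v / m) := by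
            apply mul_le_mul (by linarith) hexp1 (by positivity) (by positivity)
          linarith [e1 ▸ le_trans e2 e3]
        calc v ^ m ≤ (((m : ℝ) / a + 1) * Real.exp (a * v / m)) ^ m :=
              pow_le_pow_left₀ hv.le key m
          _ = ((m : ℝ) / a + 1) ^ m * Real.exp (a * v / m) ^ m := mul_pow _ _ _
          _ = ((m : ℝ) / a + 1) ^ m * Real.exp (a * v) := by
              rw [← Real.exp_nat_mul]
              congr 1
              field_simp
    nlinarith

lemma aux_bound {a c δ : ℝ} (ha : 0 < a) (hc : 0 ≤ c) (hδ : 0 < δ) :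
    ∃ M : ℝ, 0 < M ∧ ∀ t : ℝ, 0 < t →
      (Real.exp t - 1) ^ c * Real.exp (-(a * (Real.exp t - 1) ^ δ)) ≤ M * Real.exp (-t) := by
  obtain ⟨M₁, hM₁, h₁⟩ := aux_rpow_le_exp (by positivity : (0:ℝ) ≤ c / δ) ha
  obtain ⟨M₂, hM₂, h₂⟩ := aux_rpow_le_exp (by positivity : (0:ℝ) ≤ (c + 1) / δ) ha
  refine ⟨M₁ + M₂, by positivity, fun t ht => ?_⟩
  set u : ℝ := Real.exp t - 1 with hu
  have hu0 : 0 < u := by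
    have : (1:ℝ) < Real.exp t := by
      rw [← Real.exp_zero]; exact Real.exp_lt_exp.mpr ht
    simp only [hu]; linarith
  have hv0 : 0 < u ^ δ := Real.rpow_pos_of_pos hu0 δ
  have huc : u ^ c ≤ M₁ * Real.exp (a * u ^ δ) := by
    have e1 : (u ^ δ) ^ (c / δ) = u ^ c := by
      rw [← Real.rpow_mul hu0.le]; congr 1; field_simp
    have := h₁ (u ^ δ) hv0; rwa [e1] at this
  have huc1 : u ^ (c + 1) ≤ M₂ * Real.exp (a * u ^ δ) := by
    have e1 : (u ^ δ) ^ ((c + 1) / δ) = u ^ (c + 1) := by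
      rw [← Real.rpow_mul hu0.le]; congr 1; field_simp
    have := h₂ (u ^ δ) hv0; rwa [e1] at this
  have key : u ^ c * Real.exp t ≤ (M₁ + M₂) * Real.exp (a * u ^ δ) := by
    have e2 : u ^ c * Real.exp t = u ^ c + u ^ (c + 1) := by
      rw [Real.rpow_add hu0, Real.rpow_one]
      have : Real.exp t = 1 + u := by simp [hu]
      rw [this]; ring
    rw [e2]; linarith
  rw [Real.exp_neg, Real.exp_neg, ← div_eq_mul_inv, ← div_eq_mul_inv,
    div_le_div_iff₀ (Real.exp_pos _) (Real.exp_pos _)]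
  exact key

lemma aux_cont {a c δ : ℝ} (hc : 0 ≤ c) :
    ContinuousOn (fun t => (Real.exp t - 1) ^ c *
      Real.exp (-(a * (Real.exp t - 1) ^ δ))) (Ioi (0:ℝ)) := by
  have he : ContinuousOn (fun t : ℝ => Real.exp t - 1) (Ioi (0:ℝ)) :=
    (Real.continuous_exp.continuousOn).sub continuousOn_const
  have hne : ∀ t ∈ Ioi (0:ℝ), Real.exp t - 1 ≠ 0 ∨ (0:ℝ) ≤ c := fun t _ => Or.inr hc
  have hne' : ∀ t ∈ Ioi (0:ℝ), Real.exp t - 1 ≠ 0 ∨ (0:ℝ) ≤ δ := by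
    intro t ht
    left
    have : (1:ℝ) < Real.exp t := by
      rw [← Real.exp_zero]; exact Real.exp_lt_exp.mpr ht
    intro h; linarith [sub_eq_zero.mp h]
  exact (he.rpow_const hne).mul
    (((continuousOn_const.mul (he.rpow_const hne')).neg).rexp)

lemma aux_int {a c δ : ℝ} (ha : 0 < a) (hc : 0 ≤ c) (hδ : 0 < δ) :
    IntegrableOn (fun t => (Real.exp t - 1) ^ c *
      Real.exp (-(a * (Real.exp t - 1) ^ δ))) (Ioi (0:ℝ)) := by
  obtain ⟨M, hM, hb⟩ := aux_bound ha hc hδ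
  have hgint : IntegrableOn (fun t => M * Real.exp (-t)) (Ioi (0:ℝ)) := by
    have := (exp_neg_integrableOn_Ioi (0:ℝ) (one_pos)).const_mul M
    simpa [IntegrableOn] using this
  refine Integrable.mono' hgint ((aux_cont hc).aestronglyMeasurable measurableSet_Ioi) ?_
  rw [ae_restrict_iff' measurableSet_Ioi]
  filter_upwards with t ht
  have h1 : (1:ℝ) < Real.exp t := by
    rw [← Real.exp_zero]; exact Real.exp_lt_exp.mpr ht
  have : (0:ℝ) ≤ (Real.exp t - 1) ^ c * Real.exp (-(a * (Real.exp t - 1) ^ δ)) := by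
    have := Real.rpow_nonneg (by linarith : (0:ℝ) ≤ Real.exp t - 1) c
    positivity
  rw [Real.norm_eq_abs, abs_of_nonneg this]
  exact hb t ht

lemma psi_int {A' δ : ℝ} (n : ℕ) {p : ℝ} (hA : 0 < A') (hδ : 0 < δ) (hp : 0 < p) :
    IntegrableOn (fun t => (Real.exp t - 1) ^ ((n : ℝ) * δ) *
      Real.exp (-A' * p * (Real.exp t - 1) ^ δ)) (Ioi (0:ℝ)) := by
  have := aux_int (a := A' * p) (c := (n : ℝ) * δ) (mul_pos hA hp)
    (by positivity) hδ
  simpa [neg_mul, mul_assoc] using this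

lemma psi_pos {A' δ : ℝ} (n : ℕ) {p : ℝ} (hA : 0 < A') (hδ : 0 < δ) (hp : 0 < p) :
    0 < psi A' δ n p := by
  have hnn : 0 ≤ᶠ[ae (volume.restrict (Ioi (0:ℝ)))]
      fun t => (Real.exp t - 1) ^ ((n : ℝ) * δ) * Real.exp (-A' * p * (Real.exp t - 1) ^ δ) := by
    rw [Filter.EventuallyLE, ae_restrict_iff' measurableSet_Ioi]
    filter_upwards with t ht
    have h1 : (1:ℝ) < Real.exp t := by
      rw [← Real.exp_zero]; exact Real.exp_lt_exp.mpr ht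
    have := Real.rpow_nonneg (by linarith : (0:ℝ) ≤ Real.exp t - 1) ((n : ℝ) * δ)
    positivity
  rw [psi, setIntegral_pos_iff_support_of_nonneg_ae hnn (psi_int n hA hδ hp)]
  refine lt_of_lt_of_le ?_ (measure_mono (fun t (ht : t ∈ Ioi (0:ℝ)) => ?_))
  · exact (by simp [Real.volume_Ioi] : (0:ENNReal) < volume (Ioi (0:ℝ)))
  · refine ⟨?_, ht⟩
    have h1 : (1:ℝ) < Real.exp t := by
      rw [← Real.exp_zero]; exact Real.exp_lt_exp.mpr ht
    have h2 : (0:ℝ) < (Real.exp t - 1) ^ ((n : ℝ) * δ) :=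
      Real.rpow_pos_of_pos (by linarith) _
    have h3 : (0:ℝ) < Real.exp (-A' * p * (Real.exp t - 1) ^ δ) := Real.exp_pos _
    exact ne_of_gt (by positivity)

lemma psi_cont {A' δ : ℝ} (n : ℕ) (x : ℝ) (hδ : 0 ≤ δ) :
    ContinuousOn (fun t => (Real.exp t - 1) ^ ((n : ℝ) * δ) *
      Real.exp (-A' * x * (Real.exp t - 1) ^ δ)) (Ioi (0:ℝ)) := by
  have := aux_cont (a := A' * x) (c := (n : ℝ) * δ) (δ := δ) (by positivity)
  simpa [neg_mul, mul_assoc] using this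

lemma psi_hasDerivAt {A' δ p : ℝ} (hA : 0 < A') (hδ : 0 < δ) (hδ1 : δ ≤ 1) (hp : 0 < p) :
    HasDerivAt (psi A' δ 0) (-A' * psi A' δ 1 p) p := by
  set μ := volume.restrict (Ioi (0:ℝ))
  set F : ℝ → ℝ → ℝ := fun x t =>
    (Real.exp t - 1) ^ (((0:ℕ) : ℝ) * δ) * Real.exp (-A' * x * (Real.exp t - 1) ^ δ)
  set F' : ℝ → ℝ → ℝ := fun x t =>
    -A' * ((Real.exp t - 1) ^ (((1:ℕ) : ℝ) * δ) * Real.exp (-A' * x * (Real.exp t - 1) ^ δ))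
  set bound : ℝ → ℝ := fun t =>
    A' * ((Real.exp t - 1) ^ δ * Real.exp (-(A' * (p/2) * (Real.exp t - 1) ^ δ)))
  have hε : (0:ℝ) < p / 2 := by linarith
  have hmeas : ∀ᶠ x in nhds p, AEStronglyMeasurable (F x) μ := by
    filter_upwards with x
    exact (psi_cont 0 x hδ.le).aestronglyMeasurable measurableSet_Ioi
  have hint : Integrable (F p) μ := by
    have := aux_int (a := A' * p) (c := ((0:ℕ):ℝ) * δ) (mul_pos hA hp) (by positivity) hδ
    simpa [F, μ, neg_mul, mul_assoc, IntegrableOn] using this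
  have hF'meas : AEStronglyMeasurable (F' p) μ :=
    (continuousOn_const.mul (psi_cont 1 p hδ.le)).aestronglyMeasurable measurableSet_Ioi
  have hbound : ∀ᵐ t ∂μ, ∀ x ∈ Metric.ball p (p/2), ‖F' x t‖ ≤ bound t := by
    rw [ae_restrict_iff' measurableSet_Ioi]
    filter_upwards with t ht
    intro x hx
    have hx2 : p / 2 < x := by
      rw [Metric.mem_ball, Real.dist_eq, abs_lt] at hx
      linarith [hx.1]
    have h1 : (1:ℝ) < Real.exp t := by
      rw [← Real.exp_zero]; exact Real.exp_lt_exp.mpr ht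
    have hu : (0:ℝ) < Real.exp t - 1 := by linarith
    have hw : (0:ℝ) < (Real.exp t - 1) ^ δ := Real.rpow_pos_of_pos hu δ
    have hone : (((1:ℕ):ℝ)) * δ = δ := by norm_num
    have hF'val : F' x t = -A' * ((Real.exp t - 1) ^ δ *
        Real.exp (-A' * x * (Real.exp t - 1) ^ δ)) := by
      simp only [F', hone]
    have habs : ‖F' x t‖ = A' * ((Real.exp t - 1) ^ δ *
        Real.exp (-A' * x * (Real.exp t - 1) ^ δ)) := by
      rw [hF'val, Real.norm_eq_abs, abs_mul, abs_neg, abs_of_nonneg hA.le,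
        abs_of_nonneg (by positivity)]
    rw [habs]
    have hle : Real.exp (-A' * x * (Real.exp t - 1) ^ δ) ≤
        Real.exp (-(A' * (p/2) * (Real.exp t - 1) ^ δ)) :=
      Real.exp_le_exp.mpr (by nlinarith [mul_pos (mul_pos hA hw) (sub_pos.mpr hx2)])
    exact mul_le_mul_of_nonneg_left (mul_le_mul_of_nonneg_left hle hw.le) hA.le
  have bint : Integrable bound μ :=
    (aux_int (a := A' * (p/2)) (c := δ) (mul_pos hA hε) hδ.le hδ).const_mul A'
  have hdiff : ∀ᵐ t ∂μ, ∀ x ∈ Metric.ball p (p/2), HasDerivAt (F · t) (F' x t) x := by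
    rw [ae_restrict_iff' measurableSet_Ioi]
    filter_upwards with t ht
    intro x _
    have h1 : (1:ℝ) < Real.exp t := by
      rw [← Real.exp_zero]; exact Real.exp_lt_exp.mpr ht
    have hu : (0:ℝ) < Real.exp t - 1 := by linarith
    set w : ℝ := (Real.exp t - 1) ^ δ with hwdef
    have hd : HasDerivAt (fun y : ℝ => -A' * y * w) (-A' * w) x := by
      simpa using ((hasDerivAt_id x).const_mul (-A')).mul_const w
    have hd2 : HasDerivAt (fun y : ℝ => Real.exp (-A' * y * w))
        (Real.exp (-A' * x * w) * (-A' * w)) x := hd.exp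
    have hd3 := hd2.const_mul ((Real.exp t - 1) ^ (((0:ℕ):ℝ) * δ))
    refine hd3.congr_deriv ?_
    simp only [F', Nat.cast_zero, Nat.cast_one, zero_mul, one_mul, Real.rpow_zero, hwdef]
    ring
  obtain ⟨-, hder⟩ := hasDerivAt_integral_of_dominated_loc_of_deriv_le (Metric.ball_mem_nhds p hε) hmeas hint hF'meas
    hbound bint hdiff
  have heq : (∫ t, F' p t ∂μ) = -A' * psi A' δ 1 p := by
    simp only [F', psi, μ]
    exact integral_const_mul _ _
  rw [heq] at hder
  exact hder

/-- For `A' > 0`, `δ ∈ (0,1)`, `τ > 0`, `K₀ > 0`, if `p* ∈ (0,1)` is a local maximum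
of the utility `U(p) = K₀·p³·τ^δ·exp(−A'·p·τ^δ/(1−p)^(1−δ))·ψ₀(p)` on `(0,1)`, then
`3/(A'·p*) − τ^δ·(1 − p*·δ)/(1−p*)^(2−δ) = ψ₁(p*)/ψ₀(p*)`. -/
theorem stmt_12 (A' δ τ K₀ : ℝ) (hA : 0 < A') (hδ : δ ∈ Set.Ioo (0 : ℝ) 1)
    (hτ : 0 < τ) (hK : 0 < K₀) (pstar : ℝ) (hps : pstar ∈ Set.Ioo (0 : ℝ) 1)
    (hmax : IsLocalMaxOn
      (fun p : ℝ => K₀ * p ^ 3 * τ ^ δ *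
        Real.exp (-A' * p * τ ^ δ / (1 - p) ^ (1 - δ)) * psi A' δ 0 p)
      (Set.Ioo (0 : ℝ) 1) pstar) :
    3 / (A' * pstar) - τ ^ δ * (1 - pstar * δ) / (1 - pstar) ^ (2 - δ) =
      psi A' δ 1 pstar / psi A' δ 0 pstar := by
  obtain ⟨hp0, hp1⟩ := hps
  obtain ⟨hδ0, hδ1⟩ := hδ
  have hq : (0:ℝ) < 1 - pstar := by linarith
  set P := pstar
  set T : ℝ := τ ^ δ with hT
  have hTpos : 0 < T := Real.rpow_pos_of_pos hτ δ
  have hΨ0 : 0 < psi A' δ 0 P := psi_pos 0 hA hδ0 hp0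
  -- derivative of the denominator (1-p)^(1-δ)
  have hden : HasDerivAt (fun p : ℝ => (1 - p) ^ (1 - δ))
      (-1 * (1 - δ) * (1 - P) ^ (1 - δ - 1)) P := by
    have h1 : HasDerivAt (fun p : ℝ => 1 - p) (-1) P := by
      simpa using (hasDerivAt_id P).const_sub 1
    exact h1.rpow_const (Or.inl (by positivity))
  -- derivative of the numerator -A'*p*T
  have hnum : HasDerivAt (fun p : ℝ => -A' * p * T) (-A' * T) P := by
    simpa using ((hasDerivAt_id P).const_mul (-A')).mul_const T
  have hdne : (1 - P) ^ (1 - δ) ≠ 0 := by positivity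
  have hg : HasDerivAt (fun p : ℝ => -A' * p * T / (1 - p) ^ (1 - δ))
      ((-A' * T * (1 - P) ^ (1 - δ) - (-A' * P * T) * (-1 * (1 - δ) * (1 - P) ^ (1 - δ - 1))) /
        ((1 - P) ^ (1 - δ)) ^ 2) P := hnum.div hden hdne
  have hE := hg.exp
  have hcube : HasDerivAt (fun p : ℝ => K₀ * p ^ 3 * T) (K₀ * (3 * P ^ 2) * T) P := by
    have := ((hasDerivAt_pow 3 P).const_mul K₀).mul_const T
    norm_num at this
    exact this
  have hΨd : HasDerivAt (psi A' δ 0) (-A' * psi A' δ 1 P) P :=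
    psi_hasDerivAt hA hδ0 hδ1.le hp0
  have hU := (hcube.mul hE).mul hΨd
  have hloc : IsLocalMax (fun p : ℝ => K₀ * p ^ 3 * τ ^ δ *
      Real.exp (-A' * p * τ ^ δ / (1 - p) ^ (1 - δ)) * psi A' δ 0 p) P :=
    hmax.isLocalMax (Ioo_mem_nhds hp0 hp1)
  have hzero := hloc.hasDerivAt_eq_zero hU
  -- abbreviations
  set G : ℝ := (-A' * T * (1 - P) ^ (1 - δ) - (-A' * P * T) *
      (-1 * (1 - δ) * (1 - P) ^ (1 - δ - 1))) / ((1 - P) ^ (1 - δ)) ^ 2 with hG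
  set E : ℝ := Real.exp (-A' * P * T / (1 - P) ^ (1 - δ)) with hEdef
  have hEpos : 0 < E := Real.exp_pos _
  set Ψ := psi A' δ 0 P
  set Ψ1 := psi A' δ 1 P
  have hX : (0:ℝ) < (1 - P) ^ δ := Real.rpow_pos_of_pos hq δ
  have e1 : (1 - P) ^ (1 - δ) = (1 - P) / (1 - P) ^ δ := by
    rw [Real.rpow_sub hq, Real.rpow_one]
  have e2 : (1 - P) ^ (1 - δ - 1) = ((1 - P) ^ δ)⁻¹ := by
    have : 1 - δ - 1 = -δ := by ring
    rw [this, Real.rpow_neg hq.le]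
  have e3 : (1 - P) ^ (2 - δ) = (1 - P) ^ 2 / (1 - P) ^ δ := by
    rw [Real.rpow_sub hq]
    norm_num [Real.rpow_natCast (1 - P) 2]
  have hGval : G = -(A' * T * (1 - P * δ)) * (1 - P) ^ δ / (1 - P) ^ 2 := by
    rw [hG, e1, e2]
    field_simp
    ring
  have key : 3 * Ψ + P * G * Ψ - P * A' * Ψ1 = 0 := by
    have hfac : K₀ * T * E * P ^ 2 * (3 * Ψ + P * G * Ψ - P * A' * Ψ1) = 0 := by
      simp only [Pi.mul_apply] at hzero
      linear_combination hzero
    have hne : K₀ * T * E * P ^ 2 ≠ 0 := by positivity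
    exact (mul_eq_zero.mp hfac).resolve_left hne
  rw [eq_div_iff hΨ0.ne', e3, hGval] at *
  rw [hGval] at key
  field_simp
  field_simp at key
  linear_combination key
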